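/- arXiv:1709.07691 — 2 statements merged into one kernel-verified Lean document; each statement's English description precedes it below -/
import Mathlib

section
/- Let X and Y be positive semidefinite operators on a finite-dimensional Hilbert space, with Y positive definite. Then ‖X^{1/2} Y^{-1} X^{1/2} − 𝟙‖ ≤ (1/λ_min(Y)) · ‖X − Y‖, where λ_min(Y) is the smallest eigenvalue of Y and ‖·‖ denotes the operator norm. -/
open scoped Matrix.Norms.L2Operator ComplexOrder ENNReal

namespace Matrix.PosSemidef

/-- The positive semidefinite square root of a positive semidefinite matrix
(restored: removed from Mathlib in favour of `CFC.sqrt`). -/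
noncomputable def sqrt {𝕜 : Type*} [RCLike 𝕜] {n : Type*} [Fintype n] [DecidableEq n]
    {A : Matrix n n 𝕜} (hA : A.PosSemidef) : Matrix n n 𝕜 :=
  hA.1.eigenvectorUnitary.1 * Matrix.diagonal ((↑) ∘ (Real.sqrt ∘ hA.1.eigenvalues)) *
    (star hA.1.eigenvectorUnitary : Matrix n n 𝕜)

end Matrix.PosSemidef

namespace Matrix.PosSemidef

lemma posSemidef_sqrt {n : Type*} [Fintype n] [DecidableEq n]
    {A : Matrix n n ℂ} (hA : A.PosSemidef) : hA.sqrt.PosSemidef := by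
  unfold sqrt
  have hD : (Matrix.diagonal (((↑) : ℝ → ℂ) ∘ (Real.sqrt ∘ hA.1.eigenvalues))).PosSemidef := by
    rw [Matrix.posSemidef_diagonal_iff]
    intro i
    simp [Real.sqrt_nonneg]
  have := hD.mul_mul_conjTranspose_same (hA.1.eigenvectorUnitary.1)
  simpa [Matrix.star_eq_conjTranspose] using this

lemma sqrt_mul_self {n : Type*} [Fintype n] [DecidableEq n]
    {A : Matrix n n ℂ} (hA : A.PosSemidef) : hA.sqrt * hA.sqrt = A := by
  unfold sqrt
  set U := hA.1.eigenvectorUnitary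
  have hU : (star U : Matrix n n ℂ) * U.1 = 1 := Unitary.star_mul_self_of_mem U.2
  have hDD : Matrix.diagonal (((↑) : ℝ → ℂ) ∘ (Real.sqrt ∘ hA.1.eigenvalues)) *
      Matrix.diagonal (((↑) : ℝ → ℂ) ∘ (Real.sqrt ∘ hA.1.eigenvalues)) =
      Matrix.diagonal (((↑) : ℝ → ℂ) ∘ hA.1.eigenvalues) := by
    rw [Matrix.diagonal_mul_diagonal]
    congr 1
    funext i
    simp only [Function.comp_apply]
    rw [← Complex.ofReal_mul, Real.mul_self_sqrt (hA.eigenvalues_nonneg i)]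
  conv_rhs => rw [hA.1.spectral_theorem]
  rw [Unitary.conjStarAlgAut_apply]
  calc U.1 * Matrix.diagonal (((↑) : ℝ → ℂ) ∘ (Real.sqrt ∘ hA.1.eigenvalues)) * (star U : Matrix n n ℂ) *
        (U.1 * Matrix.diagonal (((↑) : ℝ → ℂ) ∘ (Real.sqrt ∘ hA.1.eigenvalues)) * (star U : Matrix n n ℂ))
      = U.1 * Matrix.diagonal (((↑) : ℝ → ℂ) ∘ (Real.sqrt ∘ hA.1.eigenvalues)) * ((star U : Matrix n n ℂ) *
        U.1) * Matrix.diagonal (((↑) : ℝ → ℂ) ∘ (Real.sqrt ∘ hA.1.eigenvalues)) * (star U : Matrix n n ℂ) := by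
        simp only [Matrix.mul_assoc]
    _ = _ := by rw [hU, Matrix.mul_one, Matrix.mul_assoc U.1, hDD]; rfl

end Matrix.PosSemidef

namespace SqrtInvAux

open Matrix

noncomputable instance matrixCStarAlgebra {n : Type*} [Fintype n] [DecidableEq n] :
    CStarAlgebra (Matrix n n ℂ) := inferInstance

variable {n : Type*} [Fintype n] [DecidableEq n]

lemma norm_eq_toReal_spectralRadius {M : Matrix n n ℂ} (hM : M.IsHermitian) :
    ‖M‖ = (spectralRadius ℝ M).toReal :=
  (IsSelfAdjoint.toReal_spectralRadius_eq_norm (a := M) hM).symm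

lemma spectrum_mul_comm (A B : Matrix n n ℂ) :
    spectrum ℝ (A * B) = spectrum ℝ (B * A) := by
  ext r
  rcases eq_or_ne r 0 with rfl | hr
  · rw [spectrum.zero_mem_iff, spectrum.zero_mem_iff,
      Matrix.isUnit_iff_isUnit_det, Matrix.isUnit_iff_isUnit_det,
      Matrix.det_mul, Matrix.det_mul, mul_comm]
  · exact ⟨fun h => spectrum.unit_mem_mul_comm (r := Units.mk0 r hr) |>.mp h,
      fun h => spectrum.unit_mem_mul_comm (r := Units.mk0 r hr) |>.mp h⟩

lemma mem_spectrum_sub_one_iff (A : Matrix n n ℂ) (r : ℝ) :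
    r ∈ spectrum ℝ (A - 1) ↔ r + 1 ∈ spectrum ℝ A := by
  rw [show (A - 1 : Matrix n n ℂ) = -(algebraMap ℝ (Matrix n n ℂ)) 1 + A by
    rw [_root_.map_one, neg_add_eq_sub], ← spectrum.add_mem_iff]

lemma norm_mul_conjTranspose_sub_one (A : Matrix n n ℂ) :
    ‖Aᴴ * A - 1‖ = ‖A * Aᴴ - 1‖ := by
  have h1 : (Aᴴ * A - 1 : Matrix n n ℂ).IsHermitian :=
    ((Matrix.posSemidef_conjTranspose_mul_self A).isHermitian).sub Matrix.isHermitian_one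
  have h2 : (A * Aᴴ - 1 : Matrix n n ℂ).IsHermitian :=
    ((Matrix.posSemidef_self_mul_conjTranspose A).isHermitian).sub Matrix.isHermitian_one
  have hspec : spectrum ℝ (Aᴴ * A - 1) = spectrum ℝ (A * Aᴴ - 1) := by
    ext r
    rw [mem_spectrum_sub_one_iff, mem_spectrum_sub_one_iff, spectrum_mul_comm]
  rw [norm_eq_toReal_spectralRadius h1, norm_eq_toReal_spectralRadius h2]
  unfold spectralRadius
  rw [hspec]

lemma norm_le_of_spectrum {M : Matrix n n ℂ} (hM : M.IsHermitian) {c : ℝ} (hc : 0 ≤ c)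
    (h : ∀ k ∈ spectrum ℝ M, |k| ≤ c) : ‖M‖ ≤ c := by
  rw [norm_eq_toReal_spectralRadius hM]
  refine ENNReal.toReal_le_of_le_ofReal hc ?_
  refine iSup₂_le fun k hk => ?_
  rw [← enorm_eq_nnnorm, ← ofReal_norm]
  exact ENNReal.ofReal_le_ofReal (by simpa using h k hk)

end SqrtInvAux

open SqrtInvAux Matrix

/-- For `X ≥ 0` and `Y > 0` Hermitian matrices,
`‖X^{1/2} Y⁻¹ X^{1/2} - 𝟙‖ ≤ λ_min(Y)⁻¹ ‖X - Y‖` in the (L2) operator norm. -/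
theorem sqrt_inv_sqrt_sub_one_norm_le {n : Type*} [Fintype n] [DecidableEq n] [Nonempty n]
    {X Y : Matrix n n ℂ} (hX : X.PosSemidef) (hY : Y.PosDef) :
    ‖hX.sqrt * Y⁻¹ * hX.sqrt - 1‖ ≤ (⨅ i, hY.1.eigenvalues i)⁻¹ * ‖X - Y‖ := by
  classical
  set m : ℝ := ⨅ i, hY.1.eigenvalues i with hm
  have hbdd : BddBelow (Set.range hY.1.eigenvalues) := (Set.finite_range _).bddBelow
  have hm_le : ∀ i, m ≤ hY.1.eigenvalues i := fun i => ciInf_le hbdd i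
  have hm_pos : 0 < m := by
    obtain ⟨j, hj⟩ := Finite.exists_min hY.1.eigenvalues
    exact lt_of_lt_of_le (hY.eigenvalues_pos j) (le_ciInf hj)
  -- norm bound on Y⁻¹
  have hYinv : (Y⁻¹).PosDef := hY.inv
  have hnormYinv : ‖Y⁻¹‖ ≤ m⁻¹ := by
    refine norm_le_of_spectrum hYinv.1 (by positivity) fun k hk => ?_
    have hkpos : 0 < k := by
      rw [hYinv.1.spectrum_real_eq_range_eigenvalues] at hk
      obtain ⟨i, rfl⟩ := hk
      exact hYinv.eigenvalues_pos i
    have hkinv : k⁻¹ ∈ spectrum ℝ Y := by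
      have hu : IsUnit Y := hY.isUnit
      have ha : (↑hu.unit : Matrix n n ℂ) = Y := hu.unit_spec
      have ha' : (↑hu.unit⁻¹ : Matrix n n ℂ) = Y⁻¹ := by
        rw [Matrix.coe_units_inv, ha]
      have := (spectrum.inv_mem_iff (r := Units.mk0 k hkpos.ne') (a := hu.unit⁻¹)).mp
        (by rw [ha']; simpa using hk)
      rwa [inv_inv, ha, Units.val_inv_eq_inv_val, Units.val_mk0] at this
    have hkinv_ge : m ≤ k⁻¹ := by
      rw [hY.1.spectrum_real_eq_range_eigenvalues] at hkinv
      obtain ⟨j, hj⟩ := hkinv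
      rw [← hj]; exact hm_le j
    have hk_le : k ≤ m⁻¹ := by
      rw [← inv_inv k]
      exact inv_anti₀ hm_pos hkinv_ge
    rwa [abs_of_pos hkpos]
  -- set up S, R
  set S := hX.sqrt with hS
  have hSH : Sᴴ = S := hX.posSemidef_sqrt.isHermitian
  have hRps : (Y⁻¹).PosSemidef := hYinv.posSemidef
  set R := hRps.sqrt with hR
  have hRH : Rᴴ = R := hRps.posSemidef_sqrt.isHermitian
  have hRR : R * R = Y⁻¹ := hRps.sqrt_mul_self
  have hSS : S * S = X := hX.sqrt_mul_self
  have hYu : IsUnit Y := hY.isUnit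
  have hYd : IsUnit Y.det := hY.det_pos.ne'.isUnit
  have hRYR : R * Y * R = 1 := by
    have hRu : IsUnit (R * Y * R) := by
      have hRuu : IsUnit R := by
        rw [Matrix.isUnit_iff_isUnit_det]
        have h1 : IsUnit (Y⁻¹) := Matrix.isUnit_nonsing_inv_iff.mpr hYu
        have : IsUnit (R * R).det := (Matrix.isUnit_iff_isUnit_det _).mp (hRR ▸ h1)
        rw [Matrix.det_mul] at this
        exact isUnit_of_mul_isUnit_left this
      exact (hRuu.mul hYu).mul hRuu
    have hP2 : (R * Y * R) * (R * Y * R) = (R * Y * R) * 1 := by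
      have : Y * (R * R) * Y = Y := by
        rw [hRR, Matrix.mul_nonsing_inv _ hYd, Matrix.one_mul]
      calc (R * Y * R) * (R * Y * R) = R * (Y * (R * R) * Y) * R := by
            simp only [Matrix.mul_assoc]
        _ = (R * Y * R) * 1 := by rw [this, Matrix.mul_one]
    exact hRu.mul_left_cancel hP2
  -- main chain
  have key1 : S * Y⁻¹ * S - 1 = (R * S)ᴴ * (R * S) - 1 := by
    rw [Matrix.conjTranspose_mul, hSH, hRH,
      show S * R * (R * S) = S * (R * R) * S by simp only [Matrix.mul_assoc], hRR]
  have key2 : (R * S) * (R * S)ᴴ - 1 = R * (X - Y) * R := by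
    rw [Matrix.conjTranspose_mul, hSH, hRH,
      show R * S * (S * R) = R * (S * S) * R by simp only [Matrix.mul_assoc], hSS,
      Matrix.mul_sub, Matrix.sub_mul, hRYR]
  calc ‖S * Y⁻¹ * S - 1‖ = ‖(R * S)ᴴ * (R * S) - 1‖ := by rw [key1]
    _ = ‖(R * S) * (R * S)ᴴ - 1‖ := norm_mul_conjTranspose_sub_one _
    _ = ‖R * (X - Y) * R‖ := by rw [key2]
    _ ≤ ‖R * (X - Y)‖ * ‖R‖ := norm_mul_le _ _
    _ ≤ ‖R‖ * ‖X - Y‖ * ‖R‖ := by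
        gcongr; exact norm_mul_le _ _
    _ = ‖R‖ * ‖R‖ * ‖X - Y‖ := by ring
    _ = ‖Y⁻¹‖ * ‖X - Y‖ := by
        rw [← hRR, show ‖R * R‖ = ‖star R * R‖ by rw [Matrix.star_eq_conjTranspose, hRH],
          CStarRing.norm_star_mul_self]
    _ ≤ m⁻¹ * ‖X - Y‖ := by gcongr
end

section
/- For two matrices A, B ∈ B(ℂ^D), e^A e^B = OExp[∫₀¹ (A + e^{tA} B e^{-tA}) dt], i.e., the product of the two exponentials equals the time-ordered exponential of the path t ↦ A + Γ_A^t(B), where Γ_A^t(B) = e^{tA} B e^{-tA}. -/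
open MeasureTheory

set_option maxHeartbeats 1000000
set_option synthInstance.maxHeartbeats 400000

/-- The `n`-th iterated ordered integral
`∫_{s ≥ t₁ ≥ ⋯ ≥ tₙ ≥ 0} O(t₁)⋯O(tₙ) dt₁⋯dtₙ` of an operator-valued path
`O : ℝ → B(ℂ^D)`. -/
noncomputable def orderedIntegral {D : ℕ}
    (O : ℝ → (EuclideanSpace ℂ (Fin D) →L[ℂ] EuclideanSpace ℂ (Fin D))) :
    ℕ → ℝ → (EuclideanSpace ℂ (Fin D) →L[ℂ] EuclideanSpace ℂ (Fin D))
  | 0, _ => 1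
  | n + 1, s => ∫ t in (0 : ℝ)..s, O t * orderedIntegral O n t

section Aux

variable {D : ℕ}

local notation "E" => EuclideanSpace ℂ (Fin D) →L[ℂ] EuclideanSpace ℂ (Fin D)

lemma orderedIntegral_zero (O : ℝ → E) (s : ℝ) : orderedIntegral O 0 s = 1 := rfl

lemma orderedIntegral_succ (O : ℝ → E) (n : ℕ) (s : ℝ) :
    orderedIntegral O (n + 1) s = ∫ t in (0 : ℝ)..s, O t * orderedIntegral O n t := rfl

lemma orderedIntegral_continuous {O : ℝ → E} (hO : Continuous O) (n : ℕ) :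
    Continuous (orderedIntegral O n) := by
  induction n with
  | zero => exact continuous_const
  | succ n ih =>
      have h : Continuous fun t => O t * orderedIntegral O n t := hO.mul ih
      exact (intervalIntegral.continuous_primitive (fun a b => h.intervalIntegrable a b) 0).congr
        fun s => (orderedIntegral_succ O n s).symm

lemma orderedIntegral_norm_le {O : ℝ → E} (hO : Continuous O) {K : ℝ} (hK0 : 0 ≤ K)
    (hK : ∀ t ∈ Set.Icc (0 : ℝ) 1, ‖O t‖ ≤ K) (n : ℕ) :
    ∀ s ∈ Set.Icc (0 : ℝ) 1, ‖orderedIntegral O n s‖ ≤ (K * s) ^ n / n.factorial := by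
  induction n with
  | zero =>
      intro s _
      rw [orderedIntegral_zero]
      simp only [pow_zero, Nat.factorial_zero, Nat.cast_one, div_one]
      exact ContinuousLinearMap.norm_id_le
  | succ n ih =>
      intro s hs
      obtain ⟨hs0, hs1⟩ := hs
      rw [orderedIntegral_succ]
      have hint : IntervalIntegrable
          (fun t => K * K ^ n / n.factorial * t ^ n) volume 0 s :=
        (continuous_const.mul (continuous_pow n)).intervalIntegrable 0 s
      have hb : ∀ᵐ t ∂volume.restrict (Set.uIoc (0 : ℝ) s),
          ‖O t * orderedIntegral O n t‖ ≤ K * K ^ n / n.factorial * t ^ n := by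
        rw [Set.uIoc_of_le hs0]
        refine (ae_restrict_iff' measurableSet_Ioc).mpr (Filter.Eventually.of_forall ?_)
        intro t ht
        have ht' : t ∈ Set.Icc (0 : ℝ) 1 := ⟨ht.1.le, ht.2.trans hs1⟩
        calc ‖O t * orderedIntegral O n t‖ ≤ ‖O t‖ * ‖orderedIntegral O n t‖ :=
              norm_mul_le _ _
          _ ≤ K * ((K * t) ^ n / n.factorial) :=
              mul_le_mul (hK t ht') (ih t ht') (norm_nonneg _) hK0
          _ = K * K ^ n / n.factorial * t ^ n := by rw [mul_pow]; ring
      refine (intervalIntegral.norm_integral_le_abs_of_norm_le hb hint).trans ?_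
      rw [intervalIntegral.integral_const_mul, integral_pow,
        zero_pow (Nat.succ_ne_zero n), sub_zero]
      rw [abs_of_nonneg (by positivity)]
      apply le_of_eq
      have hfac : ((n.factorial : ℝ)) ≠ 0 := by positivity
      rw [mul_pow]
      push_cast [Nat.factorial_succ]
      field_simp
      ring

lemma exp_path_continuous (A : E) :
    Continuous fun t : ℝ => NormedSpace.exp (t • A) :=
  by
  letI : NormedAlgebra ℚ (EuclideanSpace ℂ (Fin D) →L[ℂ] EuclideanSpace ℂ (Fin D)) := .restrictScalars ℚ ℂ _
  exact NormedSpace.exp_continuous.comp (continuous_id.smul continuous_const)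

lemma exp_path_hasDerivAt (A : E) (s : ℝ) :
    HasDerivAt (fun t : ℝ => NormedSpace.exp (t • A))
      (A * NormedSpace.exp (s • A)) s := by
  have := hasDerivAt_exp_smul_const' (𝕂 := ℝ) A s
  exact this

lemma exp_neg_mul_exp_eq_one (A : E) (s : ℝ) :
    NormedSpace.exp (-(s • A)) * NormedSpace.exp (s • A) = 1 := by
  letI : NormedAlgebra ℚ (EuclideanSpace ℂ (Fin D) →L[ℂ] EuclideanSpace ℂ (Fin D)) := .restrictScalars ℚ ℂ _
  rw [← NormedSpace.exp_add_of_commute (Commute.refl (s • A)).neg_left, neg_add_cancel,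
    NormedSpace.exp_zero]

lemma expand_key (A B eA eB eAinv : E) (h1 : eAinv * eA = 1) (h2 : eB * B = B * eB) :
    (A + eA * B * eAinv) * (eA * eB) = A * eA * eB + eA * (eB * B) := by
  have h3 : eA * B * eAinv * (eA * eB) = eA * (eB * B) := by
    rw [h2]
    calc eA * B * eAinv * (eA * eB) = eA * B * ((eAinv * eA) * eB) := by noncomm_ring
      _ = eA * (B * eB) := by rw [h1, one_mul, mul_assoc]
  rw [add_mul, h3, mul_assoc]

end Aux

/-- For `A, B ∈ B(ℂ^D)`,
`e^A e^B = OExp[∫₀¹ (A + e^{tA} B e^{-tA}) dt]`, i.e. the product of the two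
exponentials is the time-ordered exponential of the path `t ↦ A + Γ_A^t(B)`
where `Γ_A^t(B) = e^{tA} B e^{-tA}`. -/
theorem exp_mul_exp_eq_expansional {D : ℕ}
    (A B : EuclideanSpace ℂ (Fin D) →L[ℂ] EuclideanSpace ℂ (Fin D)) :
    NormedSpace.exp A * NormedSpace.exp B =
      ∑' n, orderedIntegral
        (fun t => A + NormedSpace.exp (t • A) * B * NormedSpace.exp (-(t • A))) n 1 := by
  set O : ℝ → (EuclideanSpace ℂ (Fin D) →L[ℂ] EuclideanSpace ℂ (Fin D)) :=
    fun t => A + NormedSpace.exp (t • A) * B * NormedSpace.exp (-(t • A)) with hOdef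
  set F : ℝ → (EuclideanSpace ℂ (Fin D) →L[ℂ] EuclideanSpace ℂ (Fin D)) :=
    fun s => NormedSpace.exp (s • A) * NormedSpace.exp (s • B) with hFdef
  set P := orderedIntegral O with hPdef
  set S : ℕ → ℝ → (EuclideanSpace ℂ (Fin D) →L[ℂ] EuclideanSpace ℂ (Fin D)) :=
    fun N s => ∑ n ∈ Finset.range N, P n s with hSdef
  -- continuity facts
  have hOcont : Continuous O := by
    rw [hOdef]
    refine continuous_const.add (((exp_path_continuous A).mul continuous_const).mul ?_)
    letI : NormedAlgebra ℚ (EuclideanSpace ℂ (Fin D) →L[ℂ] EuclideanSpace ℂ (Fin D)) := .restrictScalars ℚ ℂ _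
    exact NormedSpace.exp_continuous.comp ((continuous_id.smul continuous_const).neg)
  have hFcont : Continuous F := by
    rw [hFdef]; exact (exp_path_continuous A).mul (exp_path_continuous B)
  have hPcont : ∀ n, Continuous (P n) := orderedIntegral_continuous hOcont
  -- F solves the ODE
  have hF' : ∀ s : ℝ, HasDerivAt F (O s * F s) s := by
    intro s
    have h1 := exp_path_hasDerivAt A s
    have hcB : Commute (s • B) B := by
      show (s • B) * B = B * (s • B)
      ext x
      simp only [ContinuousLinearMap.mul_apply, ContinuousLinearMap.smul_apply,
        B.map_smul_of_tower]
    have h2 : HasDerivAt (fun t : ℝ => NormedSpace.exp (t • B))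
        (NormedSpace.exp (s • B) * B) s := by
      have := exp_path_hasDerivAt B s
      rwa [← (hcB.exp_left.eq)] at this
    have hmul := h1.mul h2
    rw [hFdef]
    refine hmul.congr_deriv ?_
    simp only [hOdef, hFdef]
    exact (expand_key A B _ _ _ (exp_neg_mul_exp_eq_one A s) (hcB.exp_left.eq)).symm
  -- integral equation for F
  have hFint : ∀ s : ℝ, F s = 1 + ∫ t in (0:ℝ)..s, O t * F t := by
    intro s
    have hderiv : ∀ t ∈ Set.uIcc (0:ℝ) s, HasDerivAt F (O t * F t) t := fun t _ => hF' t
    have hint : IntervalIntegrable (fun t => O t * F t) volume 0 s :=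
      (hOcont.mul hFcont).intervalIntegrable 0 s
    have h := intervalIntegral.integral_eq_sub_of_hasDerivAt hderiv hint
    have hF0 : F 0 = 1 := by
      simp only [hFdef]
      rw [zero_smul ℝ A, zero_smul ℝ B, NormedSpace.exp_zero, one_mul]
    rw [h, hF0]
    abel
  -- recursion for the error term
  have hErec : ∀ (N : ℕ) (s : ℝ),
      F s - S (N + 1) s = ∫ t in (0:ℝ)..s, O t * (F t - S N t) := by
    intro N s
    have hP0 : P 0 s = 1 := rfl
    have hSsucc : S (N + 1) s = 1 + ∑ n ∈ Finset.range N, P (n + 1) s := by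
      simp only [hSdef]
      rw [Finset.sum_range_succ', hP0, add_comm]
    have hPint : ∀ n, P (n + 1) s = ∫ t in (0:ℝ)..s, O t * P n t := fun n =>
      orderedIntegral_succ O n s
    have hintP : ∀ n : ℕ, IntervalIntegrable (fun t => O t * P n t) volume 0 s :=
      fun n => (hOcont.mul (hPcont n)).intervalIntegrable 0 s
    have hintF : IntervalIntegrable (fun t => O t * F t) volume 0 s :=
      (hOcont.mul hFcont).intervalIntegrable 0 s
    have hsum : ∑ n ∈ Finset.range N, P (n + 1) s
        = ∫ t in (0:ℝ)..s, ∑ n ∈ Finset.range N, O t * P n t := by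
      rw [intervalIntegral.integral_finset_sum (fun n _ => hintP n)]
      exact Finset.sum_congr rfl fun n _ => hPint n
    rw [hFint s, hSsucc, hsum]
    have hintSum : IntervalIntegrable
        (fun t => ∑ n ∈ Finset.range N, O t * P n t) volume 0 s :=
      (continuous_finset_sum _ fun n _ => hOcont.mul (hPcont n)).intervalIntegrable 0 s
    rw [add_sub_add_left_eq_sub, ← intervalIntegral.integral_sub hintF hintSum]
    refine intervalIntegral.integral_congr fun t _ => ?_
    simp only [hSdef]
    rw [mul_sub, Finset.mul_sum]
  -- choose bounds
  obtain ⟨K₀, hK₀⟩ := isCompact_Icc.exists_bound_of_continuousOn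
    (hOcont.continuousOn : ContinuousOn O (Set.Icc (0:ℝ) 1))
  obtain ⟨M₀, hM₀⟩ := isCompact_Icc.exists_bound_of_continuousOn
    (hFcont.continuousOn : ContinuousOn F (Set.Icc (0:ℝ) 1))
  set K := max K₀ 0 with hKdef
  set M := max M₀ 1 with hMdef
  have hK0 : 0 ≤ K := le_max_right _ _
  have hM1 : (1:ℝ) ≤ M := le_max_right _ _
  have hM0 : (0:ℝ) ≤ M := zero_le_one.trans hM1
  have hK : ∀ t ∈ Set.Icc (0:ℝ) 1, ‖O t‖ ≤ K := fun t ht =>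
    (hK₀ t ht).trans (le_max_left _ _)
  have hM : ∀ t ∈ Set.Icc (0:ℝ) 1, ‖F t‖ ≤ M := fun t ht =>
    (hM₀ t ht).trans (le_max_left _ _)
  -- error bound
  have hEbound : ∀ N : ℕ, ∀ s ∈ Set.Icc (0:ℝ) 1,
      ‖F s - S N s‖ ≤ M * (K * s) ^ N / N.factorial := by
    intro N
    induction N with
    | zero =>
        intro s hs
        have hS0 : S 0 s = 0 := by simp [hSdef]
        rw [hS0, sub_zero]
        simpa using hM s hs
    | succ N ih =>
        intro s hs
        obtain ⟨hs0, hs1⟩ := hs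
        rw [hErec N s]
        have hint : IntervalIntegrable
            (fun t => M * K ^ (N+1) / N.factorial * t ^ N) volume 0 s :=
          (continuous_const.mul (continuous_pow N)).intervalIntegrable 0 s
        have hb : ∀ᵐ t ∂volume.restrict (Set.uIoc (0:ℝ) s),
            ‖O t * (F t - S N t)‖ ≤ M * K ^ (N+1) / N.factorial * t ^ N := by
          rw [Set.uIoc_of_le hs0]
          refine (ae_restrict_iff' measurableSet_Ioc).mpr (Filter.Eventually.of_forall ?_)
          intro t ht
          have ht' : t ∈ Set.Icc (0:ℝ) 1 := ⟨ht.1.le, ht.2.trans hs1⟩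
          calc ‖O t * (F t - S N t)‖ ≤ ‖O t‖ * ‖F t - S N t‖ := norm_mul_le _ _
            _ ≤ K * (M * (K * t) ^ N / N.factorial) :=
                mul_le_mul (hK t ht') (ih t ht') (norm_nonneg _) hK0
            _ = M * K ^ (N+1) / N.factorial * t ^ N := by
                rw [mul_pow, pow_succ]; ring
        refine (intervalIntegral.norm_integral_le_abs_of_norm_le hb hint).trans ?_
        rw [intervalIntegral.integral_const_mul, integral_pow,
          zero_pow (Nat.succ_ne_zero N), sub_zero]
        rw [abs_of_nonneg (by positivity)]
        apply le_of_eq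
        have hfac : ((N.factorial : ℝ)) ≠ 0 := by positivity
        rw [mul_pow]
        push_cast [Nat.factorial_succ]
        field_simp
  -- summability at s = 1
  have h1mem : (1:ℝ) ∈ Set.Icc (0:ℝ) 1 := ⟨zero_le_one, le_refl 1⟩
  have hPsummable : Summable fun n => P n 1 := by
    refine Summable.of_norm_bounded
      (Real.summable_pow_div_factorial K) ?_
    intro n
    have := orderedIntegral_norm_le hOcont hK0 hK n 1 h1mem
    simpa [mul_one] using this
  -- limit of partial sums
  have htendsto1 : Filter.Tendsto (fun N => S N 1) Filter.atTop (nhds (∑' n, P n 1)) := by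
    simp only [hSdef]
    exact hPsummable.hasSum.tendsto_sum_nat
  have htendsto2 : Filter.Tendsto (fun N => S N 1) Filter.atTop (nhds (F 1)) := by
    rw [tendsto_iff_norm_sub_tendsto_zero]
    have hub : ∀ N : ℕ, ‖S N 1 - F 1‖ ≤ M * (K ^ N / N.factorial) := by
      intro N
      rw [norm_sub_rev]
      calc ‖F 1 - S N 1‖ ≤ M * (K * 1) ^ N / N.factorial := hEbound N 1 h1mem
        _ = M * (K ^ N / N.factorial) := by rw [mul_one]; ring
    have hzero : Filter.Tendsto (fun N : ℕ => M * (K ^ N / N.factorial))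
        Filter.atTop (nhds 0) := by
      have h2 := (Real.summable_pow_div_factorial K).tendsto_atTop_zero.const_mul M
      simpa using h2
    exact squeeze_zero (fun N => norm_nonneg _) hub hzero
  have hEq : F 1 = ∑' n, P n 1 := tendsto_nhds_unique htendsto2 htendsto1
  have hF1 : F 1 = NormedSpace.exp A * NormedSpace.exp B := by
    simp only [hFdef]
    rw [one_smul, one_smul]
  rw [← hF1, hEq]
end
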